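/- arXiv:2005.04281 — 2 statements merged into one kernel-verified Lean document; each statement's English description precedes it below -/
import Mathlib

section
/- Let T be a commutative noetherian integral domain and let R be a finitely generated associative (not necessarily commutative) T-algebra. If I and J are two-sided ideals of R such that both R/I and R/J are finitely generated as T-modules, then R/(IJ) is also a finitely generated T-module. -/
open Submodule

private theorem exists_fg_sup' {T M : Type*} [CommRing T] [AddCommGroup M] [Module T M]
    (p : Submodule T M) (h : Module.Finite T (M ⧸ p)) :
    ∃ V : Submodule T M, V.FG ∧ p ⊔ V = ⊤ := by
  obtain ⟨s, hs⟩ := h.fg_top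
  choose f hf using Submodule.mkQ_surjective p
  refine ⟨span T (f '' ↑s), fg_span (s.finite_toSet.image f), ?_⟩
  rw [← Submodule.map_mkQ_eq_top, Submodule.map_span, Set.image_image]
  simp only [hf]
  simpa using hs

private theorem finite_of_fg_sup {T M : Type*} [CommRing T] [AddCommGroup M] [Module T M]
    (p V : Submodule T M) (hV : V.FG) (h : p ⊔ V = ⊤) :
    Module.Finite T (M ⧸ p) := by
  have : Module.Finite T V := Module.Finite.iff_fg.mpr hV
  refine Module.Finite.of_surjective (p.mkQ.comp V.subtype) ?_
  rw [← LinearMap.range_eq_top, LinearMap.range_comp, Submodule.range_subtype,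
    Submodule.map_mkQ_eq_top, h]

/-- Let `T` be a commutative noetherian integral domain and `R` a finitely
generated associative (not necessarily commutative) `T`-algebra.  If `I` and `J` are two-sided
ideals of `R` such that `R/I` and `R/J` are finitely generated `T`-modules, then `R/(IJ)` is a
finitely generated `T`-module.  Here `IJ` is the (left-)ideal generated by products `a*b` with
`a ∈ I`, `b ∈ J`; since `I` is two-sided this coincides with the additive span of such products. -/
theorem stmt0 {T R : Type*} [CommRing T] [IsNoetherianRing T] [IsDomain T]
    [Ring R] [Algebra T R] [Algebra.FiniteType T R]
    (I J : Ideal R)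
    (hI2 : ∀ a ∈ I, ∀ r : R, a * r ∈ I) (hJ2 : ∀ a ∈ J, ∀ r : R, a * r ∈ J)
    (hI : Module.Finite T (R ⧸ I.restrictScalars T))
    (hJ : Module.Finite T (R ⧸ J.restrictScalars T)) :
    Module.Finite T
      (R ⧸ (Ideal.span {x : R | ∃ a ∈ I, ∃ b ∈ J, x = a * b}).restrictScalars T) := by
  classical
  set K : Submodule T R :=
    (Ideal.span {x : R | ∃ a ∈ I, ∃ b ∈ J, x = a * b}).restrictScalars T with hK
  -- generators of R as a T-algebra
  obtain ⟨S, hS⟩ := (inferInstance : Algebra.FiniteType T R).out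
  -- finite complements of I and J
  obtain ⟨V₀, hV₀fg, hV₀⟩ := exists_fg_sup' (I.restrictScalars T) hI
  obtain ⟨W, hWfg, hW⟩ := exists_fg_sup' (J.restrictScalars T) hJ
  set V : Submodule T R := V₀ ⊔ span T {1} with hVdef
  have hVfg : V.FG := hV₀fg.sup (fg_span (Set.finite_singleton 1))
  have hV : I.restrictScalars T ⊔ V = ⊤ := by
    rw [eq_top_iff, ← hV₀]
    exact sup_le le_sup_left (le_sup_of_le_right le_sup_left)
  have h1V : (1 : R) ∈ V := le_sup_right (α := Submodule T R) (mem_span_singleton_self 1)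
  obtain ⟨vs, hvs⟩ := hVfg
  obtain ⟨ws, hws⟩ := hWfg
  -- decomposition functions
  have decI : ∀ x : R, ∃ a ∈ I, ∃ v ∈ V, x = a + v := by
    intro x
    have : x ∈ I.restrictScalars T ⊔ V := hV ▸ mem_top
    obtain ⟨a, ha, v, hv, hx⟩ := mem_sup.mp this
    exact ⟨a, ha, v, hv, hx.symm⟩
  choose eI heI dI hdI hsumI using decI
  have decJ : ∀ x : R, ∃ a ∈ J, ∃ w ∈ W, x = a + w := by
    intro x
    have : x ∈ J.restrictScalars T ⊔ W := hW ▸ mem_top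
    obtain ⟨a, ha, w, hw, hx⟩ := mem_sup.mp this
    exact ⟨a, ha, w, hw, hx.symm⟩
  choose eJ heJ dJ hdJ hsumJ using decJ
  -- the finite set B ⊆ I
  set B : Set R := (fun p : R × R => eI (p.1 * p.2)) '' (↑vs ×ˢ ↑S) with hB
  have hBfin : B.Finite := ((vs.finite_toSet.prod S.finite_toSet).image _)
  have hBI : ∀ b ∈ B, b ∈ I := by
    rintro b ⟨⟨v, s⟩, _, rfl⟩
    exact heI _
  -- N : the "right ideal" generated by B, as a T-submodule
  set N : Submodule T R := span T {x : R | ∃ b ∈ B, ∃ r : R, x = b * r} with hN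
  have hBN : ∀ b ∈ B, b ∈ N := fun b hb => subset_span ⟨b, hb, 1, (mul_one b).symm⟩
  have hNr : ∀ n ∈ N, ∀ r : R, n * r ∈ N := by
    intro n hn r
    induction hn using Submodule.span_induction with
    | mem x hx =>
      obtain ⟨b, hb, r', rfl⟩ := hx
      exact subset_span ⟨b, hb, r' * r, mul_assoc _ _ _⟩
    | zero => simp only [zero_mul, mul_zero]; exact N.zero_mem
    | add x y _ _ hx hy => rw [add_mul]; exact N.add_mem hx hy
    | smul t x _ hx => rw [smul_mul_assoc]; exact N.smul_mem t hx
  -- V * S ⊆ V ⊔ N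
  have hVS : ∀ v ∈ V, ∀ s ∈ S, v * s ∈ V ⊔ N := by
    intro v hv s hs
    rw [← hvs] at hv
    induction hv using Submodule.span_induction with
    | mem x hx =>
      have hb : eI (x * s) ∈ B := ⟨(x, s), Set.mk_mem_prod hx hs, rfl⟩
      rw [hsumI (x * s)]
      exact add_mem (mem_sup_right (hBN _ hb)) (mem_sup_left (hdI _))
    | zero => simp only [zero_mul, mul_zero]; exact (V ⊔ N).zero_mem
    | add x y _ _ hx hy => rw [add_mul]; exact add_mem hx hy
    | smul t x _ hx => rw [smul_mul_assoc]; exact Submodule.smul_mem _ t hx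
  -- every product of generators is in V ⊔ N
  have hlist : ∀ l : List R, (∀ y ∈ l, y ∈ (S : Set R)) → l.prod ∈ V ⊔ N := by
    intro l
    induction l using List.reverseRecOn with
    | nil => intro _; simpa using mem_sup_left h1V
    | append_singleton l a ih =>
      intro hmem
      rw [List.prod_append, List.prod_singleton]
      have hp : l.prod ∈ V ⊔ N := ih fun y hy => hmem y (List.mem_append_left _ hy)
      obtain ⟨v, hv, n, hn, heq⟩ := mem_sup.mp hp
      rw [← heq, add_mul]
      exact add_mem (hVS v hv a (hmem a (by simp)))
        (mem_sup_right (hNr n hn a))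
  -- hence R = V ⊔ N
  have htop : (⊤ : Submodule T R) ≤ V ⊔ N := by
    intro x _
    have hx : x ∈ Subalgebra.toSubmodule (Algebra.adjoin T (S : Set R)) := by
      rw [hS]; trivial
    rw [Algebra.adjoin_eq_span] at hx
    refine Submodule.span_le.mpr ?_ hx
    intro y hy
    obtain ⟨l, hl, rfl⟩ := Submonoid.exists_list_of_mem_closure hy
    exact hlist l hl
  -- the final finite piece
  set M2 : Submodule T R := span T ((fun p : R × R => p.1 * p.2) '' (B ×ˢ ↑ws)) with hM2
  have hM2fg : M2.FG := fg_span ((hBfin.prod ws.finite_toSet).image _)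
  -- N ≤ M2 ⊔ K
  have hNle : N ≤ M2 ⊔ K := by
    rw [hN, span_le]
    rintro x ⟨b, hb, r, rfl⟩
    have hgen : ∀ d ∈ span T (ws : Set R), b * d ∈ M2 := by
      intro d hd
      induction hd using Submodule.span_induction with
      | mem w hw => exact hM2 ▸ subset_span ⟨(b, w), Set.mk_mem_prod hb hw, rfl⟩
      | zero => simp only [zero_mul, mul_zero]; exact M2.zero_mem
      | add x y _ _ hx hy => rw [mul_add]; exact M2.add_mem hx hy
      | smul t x _ hx => rw [mul_smul_comm]; exact M2.smul_mem t hx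
    have hbdJ : b * dJ r ∈ M2 := hgen _ (hws ▸ hdJ r)
    have hbeJ : b * eJ r ∈ K := by
      rw [hK]
      exact Ideal.subset_span ⟨b, hBI b hb, eJ r, heJ r, rfl⟩
    rw [hsumJ r, mul_add]
    exact add_mem (mem_sup_right hbeJ) (mem_sup_left hbdJ)
  refine finite_of_fg_sup K (V ⊔ M2) (Submodule.FG.sup ⟨vs, hvs⟩ hM2fg) ?_
  rw [eq_top_iff]
  refine le_trans htop ?_
  refine sup_le ?_ (le_trans hNle ?_)
  · exact le_sup_of_le_right le_sup_left
  · exact sup_le (le_sup_of_le_right le_sup_right) le_sup_left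
end

section
/- Let T be a commutative noetherian integral domain and let R be a finitely generated associative T-algebra. If I is a two-sided ideal of R such that R/I is a finitely generated T-module, then I is finitely generated as a left ideal of R. -/
/-- Let `T` be a commutative noetherian integral domain and `R` a finitely
generated associative `T`-algebra.  If `I` is a two-sided ideal of `R` such that `R/I` is a
finitely generated `T`-module, then `I` is finitely generated as a left ideal of `R`. -/
theorem stmt1 {T R : Type*} [CommRing T] [IsNoetherianRing T] [IsDomain T]
    [Ring R] [Algebra T R] [Algebra.FiniteType T R]
    (I : Ideal R)
    (hI2 : ∀ a ∈ I, ∀ r : R, a * r ∈ I)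
    (hI : Module.Finite T (R ⧸ I.restrictScalars T)) :
    I.FG := by
  classical
  obtain ⟨s, hs⟩ := Algebra.FiniteType.out (R := T) (A := R)
  set N : Submodule T R := I.restrictScalars T with hN
  -- a finite spanning set of the quotient, lifted to R
  obtain ⟨q, hq⟩ := hI.fg_top
  have hsurj : Function.Surjective N.mkQ := Submodule.mkQ_surjective N
  set sec : (R ⧸ N) → R := Function.surjInv hsurj with hsec
  have hsec' : ∀ y, N.mkQ (sec y) = y := fun y => Function.surjInv_eq hsurj y
  set w0 : Set R := insert 1 (sec '' ↑q) with hw0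
  have hw0fin : w0.Finite := (q.finite_toSet.image _).insert 1
  set W : Submodule T R := Submodule.span T w0 with hW
  -- W ⊔ N = ⊤
  have hWN : N ⊔ W = ⊤ := by
    have hmap : W.map N.mkQ = ⊤ := by
      rw [eq_top_iff, ← hq, hW, Submodule.map_span, Submodule.span_le]
      intro y hy
      refine Submodule.subset_span ?_
      exact ⟨sec y, Or.inr ⟨y, hy, rfl⟩, hsec' y⟩
    have := Submodule.comap_map_mkQ N W
    rw [hmap, Submodule.comap_top] at this
    exact this.symm
  -- the finite T-module V
  set V : Submodule T R := Submodule.span T (w0 ∪ ⋃ x ∈ (s : Set R), (fun y => x * y) '' w0)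
    with hV
  have hWV : W ≤ V := Submodule.span_mono Set.subset_union_left
  have hVfg : V.FG := by
    refine Submodule.fg_def.2 ⟨_, ?_, rfl⟩
    exact hw0fin.union (Set.Finite.biUnion s.finite_toSet fun x _ => hw0fin.image _)
  -- K = N ⊓ V is a f.g. T-module
  set K : Submodule T R := N ⊓ V with hK
  have hKV : K ≤ V := inf_le_right
  have hKfg : K.FG := by
    haveI : IsNoetherian T V := isNoetherian_of_fg_of_noetherian V hVfg
    have h1 : (K.comap V.subtype).FG := IsNoetherian.noetherian _
    have h2 := h1.map V.subtype
    rwa [Submodule.map_comap_subtype, inf_eq_right.2 hKV] at h2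
  obtain ⟨kgen, hkgen⟩ := hKfg
  refine ⟨kgen, le_antisymm ?_ ?_⟩
  · -- span R kgen ≤ I
    rw [Ideal.span, Submodule.span_le]
    intro x hx
    have : x ∈ K := hkgen ▸ Submodule.subset_span hx
    exact this.1
  · -- I ≤ span R kgen
    set J : Ideal R := Ideal.span (kgen : Set R) with hJ
    have hKJ : K ≤ J.restrictScalars T := by
      rw [← hkgen, Submodule.span_le]
      exact fun x hx => Ideal.subset_span hx
    set U : Submodule T R := W ⊔ J.restrictScalars T with hU
    -- V ≤ U
    have hVU : V ≤ U := by
      intro v hv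
      obtain ⟨a, ha, w, hw, hvw⟩ := Submodule.mem_sup.1 (hWN ▸ Submodule.mem_top (x := v) : v ∈ N ⊔ W)
      have haV : a ∈ V := by
        have h' : a = v - w := eq_sub_of_add_eq hvw
        rw [h']; exact sub_mem hv (hWV hw)
      rw [← hvw]
      exact add_mem (Submodule.mem_sup_right (hKJ ⟨ha, haV⟩)) (Submodule.mem_sup_left hw)
    -- closure under left multiplication by generators
    have hmul : ∀ x ∈ (s : Set R), ∀ y ∈ U, x * y ∈ U := by
      intro x hx y hy
      obtain ⟨w, hw, j, hj, rfl⟩ := Submodule.mem_sup.1 hy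
      rw [mul_add]
      refine add_mem ?_ (Submodule.mem_sup_right (J.mul_mem_left x hj))
      -- x * w ∈ V ≤ U
      refine hVU ?_
      have : w ∈ Submodule.span T w0 := hw
      have hmap : (x * w) ∈ (Submodule.span T w0).map (LinearMap.mulLeft T x) :=
        ⟨w, this, rfl⟩
      rw [Submodule.map_span] at hmap
      refine Submodule.span_le.2 ?_ hmap
      intro z hz
      obtain ⟨u, hu, rfl⟩ := hz
      exact Submodule.subset_span (Or.inr (Set.mem_biUnion hx ⟨u, hu, rfl⟩))
    -- ⊤ ≤ U
    have htop : ∀ r : R, r ∈ U := by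
      intro r
      have hr : r ∈ Subalgebra.toSubmodule (Algebra.adjoin T (s : Set R)) := by
        rw [hs]; trivial
      rw [Algebra.adjoin_eq_span] at hr
      refine Submodule.span_le.2 ?_ hr
      intro m hm
      induction hm using Submonoid.closure_induction_left with
      | one => exact Submodule.mem_sup_left (Submodule.subset_span (Or.inl rfl))
      | mul_left x hx y hy ih => exact hmul x hx y ih
    intro a ha
    obtain ⟨w, hw, j, hj, hdecomp⟩ := Submodule.mem_sup.1 (htop a)
    have hJI : J ≤ I := Ideal.span_le.2
      (fun x hx => (hkgen ▸ Submodule.subset_span hx : x ∈ K).1)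
    have hwI : w ∈ K := by
      constructor
      · show w ∈ I
        have h' : w = a - j := eq_sub_of_add_eq hdecomp
        rw [h']; exact sub_mem ha (hJI hj)
      · exact hWV hw
    have : w ∈ J := hKJ hwI
    rw [← hdecomp]
    exact J.add_mem this hj
end
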